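/- Every cycle of a polynomial map f ∈ ℤ[x] acting on ℤ has length at most 2; that is, if a ∈ ℤ is a periodic point of f of minimal period m, then m ≤ 2. -/

import Mathlib

/-- Every cycle of a polynomial map `f ∈ ℤ[x]` acting on `ℤ` has length at most 2:
if `a` is a periodic point of `f` of minimal period `m`, then `m ≤ 2`. -/
theorem cycle_length_le_two (f : Polynomial ℤ) (a : ℤ) (m : ℕ) (hm : 0 < m)
    (hper : (fun x => f.eval x)^[m] a = a)
    (hmin : ∀ k : ℕ, 0 < k → (fun x => f.eval x)^[k] a = a → m ≤ k) :
    m ≤ 2 := by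
  by_contra h3
  push_neg at h3
  set F : ℤ → ℤ := fun x => f.eval x with hF
  set b : ℕ → ℤ := fun i => F^[i] a with hbdef
  have hb0 : b 0 = a := rfl
  have hbm : b m = a := hper
  have hb : ∀ i, b (i + m) = b i := by
    intro i
    simp only [hbdef]
    rw [Function.iterate_add_apply, hper]
  have hsucc : ∀ i, b (i + 1) = f.eval (b i) := by
    intro i
    simp only [hbdef, Function.iterate_succ_apply']
    rfl
  set d : ℕ → ℤ := fun i => b (i + 1) - b i with hddef
  have hdvd : ∀ i, d i ∣ d (i + 1) := by
    intro i
    have h := Polynomial.sub_dvd_eval_sub (b (i + 1)) (b i) f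
    simpa only [hddef, ← hsucc] using h
  have hdper : ∀ i, d (i + m) = d i := by
    intro i
    simp only [hddef]
    have h1 : i + m + 1 = (i + 1) + m := by ring
    rw [h1, hb, hb]
  -- nonvanishing of differences
  have hdne : ∀ i < m, d i ≠ 0 := by
    intro i him hdi
    have hfix : f.eval (b i) = b i := by
      have : b (i + 1) = b i := by
        have := sub_eq_zero.mp hdi
        exact this
      rw [← hsucc]; exact this
    have hconst : ∀ k, b (i + k) = b i := by
      intro k
      induction k with
      | zero => rfl
      | succ n ih => rw [← Nat.add_assoc, hsucc, ih, hfix]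
    have hab : a = b i := by
      have := hconst (m - i)
      rwa [Nat.add_sub_cancel' him.le, hbm] at this
    have hfa : F^[1] a = a := by
      simp only [Function.iterate_one, hF]
      rw [hab, hfix]
    have := hmin 1 one_pos hfa
    omega
  have hdnem : ∀ i ≤ m, d i ≠ 0 := by
    intro i him
    rcases eq_or_lt_of_le him with h | h
    · subst h
      have := hdper 0
      simp only [Nat.zero_add] at this
      rw [this]; exact hdne 0 hm
    · exact hdne i h
  -- natAbs is monotone along the chain up to m
  have hchain : ∀ j i, i + j ≤ m → (d i).natAbs ≤ (d (i + j)).natAbs := by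
    intro j
    induction j with
    | zero => intro i _; simp
    | succ n ih =>
      intro i hij
      have h1 : i + n ≤ m := by omega
      have h2 := ih i h1
      have h3 : (d (i + n)).natAbs ≤ (d (i + n + 1)).natAbs := by
        apply Nat.le_of_dvd
        · exact Int.natAbs_pos.mpr (hdnem (i + n + 1) (by omega))
        · exact Int.natAbs_dvd_natAbs.mpr (hdvd (i + n))
      calc (d i).natAbs ≤ (d (i + n)).natAbs := h2
        _ ≤ (d (i + (n + 1))).natAbs := by rw [← Nat.add_assoc]; exact h3
  have habs : ∀ i ≤ m, (d i).natAbs = (d 0).natAbs := by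
    intro i him
    have h1 : (d 0).natAbs ≤ (d i).natAbs := by
      have := hchain i 0 (by omega)
      simpa using this
    have h2 : (d i).natAbs ≤ (d m).natAbs := by
      have := hchain (m - i) i (by omega)
      rwa [Nat.add_sub_cancel' him] at this
    have h3 : (d m).natAbs = (d 0).natAbs := by
      have := hdper 0
      simp only [Nat.zero_add] at this
      rw [this]
    omega
  -- telescoping sum is zero
  have hsum : ∑ i ∈ Finset.range m, d i = 0 := by
    have := Finset.sum_range_sub b m
    simp only [hddef]
    rw [this, hbm, hb0, sub_self]
  by_cases hall : ∀ i < m, d i = d 0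
  · have : ∑ i ∈ Finset.range m, d i = (m : ℤ) * d 0 := by
      rw [Finset.sum_congr rfl (fun i hi => hall i (Finset.mem_range.mp hi))]
      simp [mul_comm]
    rw [hsum] at this
    have hd0 : d 0 = 0 := by
      rcases mul_eq_zero.mp this.symm with h | h
      · exact absurd h (by exact_mod_cast hm.ne')
      · exact h
    exact hdne 0 hm hd0
  · push_neg at hall
    obtain ⟨i0, hi0m, hi0⟩ := hall
    have hex : ∃ j, d j ≠ d 0 := ⟨i0, hi0⟩
    set j := Nat.find hex with hj
    have hjne : d j ≠ d 0 := Nat.find_spec hex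
    have hjle : j ≤ i0 := Nat.find_le hi0
    have hjm : j < m := lt_of_le_of_lt hjle hi0m
    have hj0 : j ≠ 0 := by
      intro h
      exact hjne (by rw [h])
    obtain ⟨k, hk⟩ : ∃ k, j = k + 1 := ⟨j - 1, by omega⟩
    have hdk : d k = d 0 := by
      have hlt : k < Nat.find hex := by omega
      exact not_not.mp (Nat.find_min hex hlt)
    have hna : (d (k + 1)).natAbs = (d k).natAbs := by
      rw [habs (k + 1) (by omega), habs k (by omega)]
    have hcase := Int.natAbs_eq_natAbs_iff.mp hna
    have hneg : d (k + 1) = -d k := by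
      rcases hcase with h | h
      · exfalso; rw [hk] at hjne; rw [h, hdk] at hjne; exact hjne rfl
      · exact h
    have hbeq : b (k + 2) = b k := by
      simp only [hddef] at hneg
      have : b (k + 1 + 1) - b (k + 1) = -(b (k + 1) - b k) := hneg
      have h22 : k + 1 + 1 = k + 2 := by ring
      rw [h22] at this
      linarith
    have hFa : F^[2] a = a := by
      have happ : F^[m - k] (b (k + 2)) = F^[m - k] (b k) := by rw [hbeq]
      have hL : F^[m - k] (b (k + 2)) = F^[2] a := by
        simp only [hbdef, ← Function.iterate_add_apply]
        have : m - k + (k + 2) = 2 + m := by omega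
        rw [this, Function.iterate_add_apply, hper]
      have hR : F^[m - k] (b k) = a := by
        simp only [hbdef, ← Function.iterate_add_apply]
        have : m - k + k = m := by omega
        rw [this, hper]
      rw [hL, hR] at happ
      exact happ
    have := hmin 2 two_pos hFa
    omega
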